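/- Let M ∈ ℝ^{n×n} satisfy ρ(√γ M) < 1 for γ ∈ (0,1), Q = S + KᵀRK with S, R symmetric positive definite, K ∈ ℝ^{d×n}, and P = Σ_{i=0}^∞ γⁱ(Mⁱ)ᵀQMⁱ. If D is symmetric positive definite then Tr(DP) ≥ σ_min(D)σ_min(S)/(1 − γρ(M)²). -/

import Mathlib

open Matrix
open scoped BigOperators

/-- Spectral radius: maximum modulus of the (complex) eigenvalues. -/
noncomputable def specRad {n : ℕ} (Z : Matrix (Fin n) (Fin n) ℝ) : ℝ :=
  (spectralRadius ℂ (Z.map (Complex.ofReal))).toReal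

namespace TraceDPAux

open Filter
open scoped Pointwise

lemma map_ofReal_pow {n : ℕ} (Z : Matrix (Fin n) (Fin n) ℝ) (i : ℕ) :
    (Z ^ i).map Complex.ofReal = (Z.map Complex.ofReal) ^ i := by
  have := map_pow (Complex.ofRealHom.mapMatrix (m := Fin n)) Z i
  simp only [RingHom.mapMatrix_apply] at this
  exact this

lemma specRad_nonneg {n : ℕ} (Z : Matrix (Fin n) (Fin n) ℝ) : 0 ≤ specRad Z :=
  ENNReal.toReal_nonneg

lemma sq_norm_le_trace {n : ℕ} (Z : Matrix (Fin n) (Fin n) ℝ) {μ : ℂ}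
    (hμ : μ ∈ spectrum ℂ (Z.map Complex.ofReal)) :
    ‖μ‖ ^ 2 ≤ (Zᵀ * Z).trace := by
  set B := Z.map Complex.ofReal with hB
  rw [← AlgEquiv.spectrum_eq (Matrix.toLinAlgEquiv' (R := ℂ) (n := Fin n)),
    ← Module.End.hasEigenvalue_iff_mem_spectrum] at hμ
  obtain ⟨v, hv⟩ := hμ.exists_hasEigenvector
  have hveq : B.mulVec v = μ • v := hv.apply_eq_smul
  have hrow : ∀ i, ∑ j, B i j * v j = μ * v i := by
    intro i
    have := congrFun hveq i
    simpa [Matrix.mulVec, dotProduct] using this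
  set c : ℝ := ∑ j, ‖v j‖ ^ 2 with hc
  have hcpos : 0 < c := by
    obtain ⟨j, hj⟩ := Function.ne_iff.mp hv.right
    exact Finset.sum_pos' (fun j _ => by positivity)
      ⟨j, Finset.mem_univ j, by simpa using pow_pos (norm_pos_iff.mpr (by simpa using hj)) 2⟩
  have key : ‖μ‖ ^ 2 * c ≤ (Zᵀ * Z).trace * c := by
    have lhs_eq : ‖μ‖ ^ 2 * c = ∑ i, ‖∑ j, B i j * v j‖ ^ 2 := by
      rw [Finset.mul_sum]
      refine Finset.sum_congr rfl fun i _ => ?_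
      rw [hrow i, norm_mul, mul_pow]
    have tr_eq : (Zᵀ * Z).trace = ∑ i, ∑ j, ‖B i j‖ ^ 2 := by
      rw [Matrix.trace]
      simp only [Matrix.diag, Matrix.mul_apply, Matrix.transpose_apply]
      rw [Finset.sum_comm]
      refine Finset.sum_congr rfl fun i _ => Finset.sum_congr rfl fun j _ => ?_
      simp only [hB, Matrix.map_apply, Complex.norm_real]
      rw [Real.norm_eq_abs, sq_abs, sq]
    rw [lhs_eq, tr_eq, Finset.sum_mul]
    refine Finset.sum_le_sum fun i _ => ?_
    calc ‖∑ j, B i j * v j‖ ^ 2 ≤ (∑ j, ‖B i j‖ * ‖v j‖) ^ 2 := by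
          refine pow_le_pow_left₀ (norm_nonneg _) ?_ 2
          refine (norm_sum_le _ _).trans ?_
          exact Finset.sum_le_sum fun j _ => le_of_eq (norm_mul _ _)
      _ ≤ (∑ j, ‖B i j‖ ^ 2) * ∑ j, ‖v j‖ ^ 2 :=
          Finset.sum_mul_sq_le_sq_mul_sq _ _ _
  exact le_of_mul_le_mul_right key hcpos

section frob

attribute [local instance] Matrix.frobeniusSeminormedAddCommGroup Matrix.frobeniusNormedSpace
  Matrix.frobeniusNormedRing Matrix.frobeniusNormedAlgebra

lemma specRad_attained {n : ℕ} (hn : 0 < n) (Z : Matrix (Fin n) (Fin n) ℝ) :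
    ∃ μ ∈ spectrum ℂ (Z.map Complex.ofReal), specRad Z = ‖μ‖ ∧
      ∀ ν ∈ spectrum ℂ (Z.map Complex.ofReal), ‖ν‖ ≤ ‖μ‖ := by
  haveI : Nonempty (Fin n) := ⟨⟨0, hn⟩⟩
  obtain ⟨μ, hμ, hrad⟩ := spectrum.exists_nnnorm_eq_spectralRadius (a := Z.map Complex.ofReal)
  refine ⟨μ, hμ, ?_, fun ν hν => ?_⟩
  · rw [specRad, ← hrad, ENNReal.coe_toReal, coe_nnnorm]
  · have h1 : (‖ν‖₊ : ENNReal) ≤ spectralRadius ℂ (Z.map Complex.ofReal) :=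
      le_iSup₂ (f := fun k (_ : k ∈ spectrum ℂ (Z.map Complex.ofReal)) => (‖k‖₊ : ENNReal)) ν hν
    rw [← hrad, ENNReal.coe_le_coe] at h1
    exact_mod_cast h1

lemma specRad_smul {n : ℕ} (hn : 0 < n) (Z : Matrix (Fin n) (Fin n) ℝ) {c : ℝ} (hc : 0 ≤ c) :
    specRad (c • Z) = c * specRad Z := by
  haveI : Nonempty (Fin n) := ⟨⟨0, hn⟩⟩
  haveI : Nontrivial (Matrix (Fin n) (Fin n) ℂ) := inferInstance
  have hmap : (c • Z).map Complex.ofReal = (c : ℂ) • Z.map Complex.ofReal := by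
    ext i j
    simp [Matrix.map_apply, Matrix.smul_apply, Complex.ofReal_mul]
  have hspec : spectrum ℂ ((c • Z).map Complex.ofReal)
      = (c : ℂ) • spectrum ℂ (Z.map Complex.ofReal) := by
    rw [hmap]
    exact spectrum.smul_eq_smul (c : ℂ) _ (spectrum.nonempty _)
  obtain ⟨μ, hμ, hμrad, hμmax⟩ := specRad_attained hn Z
  obtain ⟨ν, hν, hνrad, hνmax⟩ := specRad_attained hn (c • Z)
  rw [hνrad, hμrad]
  apply le_antisymm
  · rw [hspec] at hν
    obtain ⟨lam, hlam, rfl⟩ := hν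
    rw [norm_smul, Complex.norm_real, Real.norm_eq_abs, abs_of_nonneg hc]
    exact mul_le_mul_of_nonneg_left (hμmax lam hlam) hc
  · have : (c : ℂ) • μ ∈ spectrum ℂ ((c • Z).map Complex.ofReal) := by
      rw [hspec]; exact ⟨μ, hμ, rfl⟩
    have := hνmax _ this
    rwa [norm_smul, Complex.norm_real, Real.norm_eq_abs, abs_of_nonneg hc] at this

lemma specRad_pow_sq_le {n : ℕ} (hn : 0 < n) (Z : Matrix (Fin n) (Fin n) ℝ) (i : ℕ) :
    (specRad Z ^ i) ^ 2 ≤ ((Z ^ i)ᵀ * Z ^ i).trace := by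
  obtain ⟨μ, hμ, hrad, -⟩ := specRad_attained hn Z
  have hpow : μ ^ i ∈ spectrum ℂ ((Z ^ i).map Complex.ofReal) := by
    rw [map_ofReal_pow]
    have hsub := spectrum.subset_polynomial_aeval (Z.map Complex.ofReal)
      ((Polynomial.X : Polynomial ℂ) ^ i)
    have hmem : μ ^ i ∈ (fun k => Polynomial.eval k ((Polynomial.X : Polynomial ℂ) ^ i)) ''
        spectrum ℂ (Z.map Complex.ofReal) := ⟨μ, hμ, by simp⟩
    have := hsub hmem
    simpa [map_pow] using this
  have := sq_norm_le_trace (Z ^ i) hpow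
  rwa [norm_pow, ← hrad] at this

lemma frob_norm_map {n : ℕ} (Y : Matrix (Fin n) (Fin n) ℝ) :
    ‖Y.map Complex.ofReal‖ = ‖Y‖ := by
  rw [Matrix.frobenius_norm_def, Matrix.frobenius_norm_def]
  congr 1
  refine Finset.sum_congr rfl fun i _ => Finset.sum_congr rfl fun j _ => ?_
  simp [Matrix.map_apply, Complex.norm_real]

lemma frob_eventually_pow_le {n : ℕ} (hn : 0 < n) (Z : Matrix (Fin n) (Fin n) ℝ)
    (hZ : specRad Z < 1) :
    ∃ r : ℝ, 0 ≤ r ∧ r < 1 ∧ ∀ᶠ i : ℕ in atTop, ‖(Z ^ i : Matrix (Fin n) (Fin n) ℝ)‖ ≤ r ^ i := by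
  haveI : Nonempty (Fin n) := ⟨⟨0, hn⟩⟩
  set Zc := Z.map Complex.ofReal with hZc
  obtain ⟨μ, hμ, hrad⟩ := spectrum.exists_nnnorm_eq_spectralRadius (a := Zc)
  have hradlt : spectralRadius ℂ Zc < 1 := by
    rw [← hrad]
    rw [show ((1:ENNReal)) = ((1:NNReal) : ENNReal) from rfl, ENNReal.coe_lt_coe]
    have : ‖μ‖ < 1 := by
      rw [specRad, ← hrad, ENNReal.coe_toReal, coe_nnnorm] at hZ; exact hZ
    exact_mod_cast this
  obtain ⟨r, hr1, hr2⟩ := ENNReal.lt_iff_exists_nnreal_btwn.mp hradlt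
  have htend := spectrum.pow_nnnorm_pow_one_div_tendsto_nhds_spectralRadius Zc
  have hev : ∀ᶠ i : ℕ in atTop, ((‖Zc ^ i‖₊ : ENNReal)) ^ (1 / (i:ℝ)) < (r : ENNReal) :=
    htend.eventually_lt_const hr1
  refine ⟨r, r.coe_nonneg, by exact_mod_cast hr2, ?_⟩
  filter_upwards [hev, eventually_ge_atTop 1] with i hi hi1
  have hine : (i : ℝ) ≠ 0 := by exact_mod_cast Nat.one_le_iff_ne_zero.mp hi1
  have h1 : ((‖Zc ^ i‖₊ : ENNReal)) ≤ (r : ENNReal) ^ (i : ℕ) := by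
    have h := ENNReal.rpow_le_rpow hi.le (by positivity : (0:ℝ) ≤ (i:ℝ))
    rw [← ENNReal.rpow_mul, one_div, inv_mul_cancel₀ hine, ENNReal.rpow_one] at h
    rwa [ENNReal.rpow_natCast] at h
  have h2 : ‖Zc ^ i‖ ≤ (r : ℝ) ^ i := by
    have h3 := ENNReal.coe_le_coe.mp (by simpa [← ENNReal.coe_pow] using h1)
    exact_mod_cast h3
  rwa [← map_ofReal_pow, frob_norm_map] at h2

lemma summable_conj_pow {n : ℕ} (hn : 0 < n) (Z Q : Matrix (Fin n) (Fin n) ℝ)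
    (hZ : specRad Z < 1) :
    Summable (fun i : ℕ => ((Z ^ i)ᵀ * Q * Z ^ i : Matrix (Fin n) (Fin n) ℝ)) := by
  obtain ⟨r, hr0, hr1, hev⟩ := frob_eventually_pow_le hn Z hZ
  refine Summable.of_norm_bounded_eventually_nat (g := fun i => ‖Q‖ * (r ^ 2) ^ i) ?_ ?_
  · exact (summable_geometric_of_lt_one (by positivity) (by nlinarith)).mul_left ‖Q‖
  · filter_upwards [hev] with i hi
    calc ‖(Z ^ i)ᵀ * Q * Z ^ i‖ ≤ ‖(Z ^ i)ᵀ * Q‖ * ‖Z ^ i‖ := norm_mul_le _ _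
      _ ≤ ‖(Z ^ i)ᵀ‖ * ‖Q‖ * ‖Z ^ i‖ :=
          mul_le_mul_of_nonneg_right (norm_mul_le _ _) (norm_nonneg _)
      _ = ‖Z ^ i‖ * ‖Q‖ * ‖Z ^ i‖ := by rw [Matrix.frobenius_norm_transpose]
      _ ≤ r ^ i * ‖Q‖ * r ^ i := by
          have h0 : (0:ℝ) ≤ ‖Z ^ i‖ := norm_nonneg _
          have hQ0 : (0:ℝ) ≤ ‖Q‖ := norm_nonneg _
          have hri : (0:ℝ) ≤ r ^ i := by positivity
          exact mul_le_mul (mul_le_mul_of_nonneg_right hi hQ0) hi h0 (by positivity)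
      _ = ‖Q‖ * (r ^ 2) ^ i := by ring

end frob

lemma trace_nonneg_of_psd {n : ℕ} {X : Matrix (Fin n) (Fin n) ℝ} (hX : X.PosSemidef) :
    0 ≤ X.trace := by
  rw [Matrix.trace]
  refine Finset.sum_nonneg fun i _ => ?_
  have := hX.diag_nonneg (i := i)
  simpa [dotProduct, Matrix.mulVec, Pi.single_apply] using this

lemma trace_mul_nonneg_of_psd {n : ℕ} {B X : Matrix (Fin n) (Fin n) ℝ}
    (hB : B.PosSemidef) (hX : X.PosSemidef) : 0 ≤ (B * X).trace := by
  obtain ⟨C, rfl⟩ : ∃ C : Matrix (Fin n) (Fin n) ℝ, B = Cᵀ * C := by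
    open scoped MatrixOrder in
    exact ⟨CFC.sqrt B, by rw [← Matrix.conjTranspose_eq_transpose_of_trivial,
      (CFC.sqrt_nonneg B).posSemidef.1.eq, CFC.sqrt_mul_sqrt_self B hB.nonneg]⟩
  rw [Matrix.mul_assoc, Matrix.trace_mul_comm]
  exact trace_nonneg_of_psd (hX.mul_mul_conjTranspose_same C)

lemma sub_inf_smul_psd {n : ℕ} [Nonempty (Fin n)] {A : Matrix (Fin n) (Fin n) ℝ}
    (hA : A.IsHermitian) :
    (A - (⨅ i, hA.eigenvalues i) • (1 : Matrix (Fin n) (Fin n) ℝ)).PosSemidef := by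
  set c := ⨅ i, hA.eigenvalues i with hc
  set U := (hA.eigenvectorUnitary : Matrix (Fin n) (Fin n) ℝ) with hU
  have hUU : U * star U = 1 := (Matrix.mem_unitaryGroup_iff).mp hA.eigenvectorUnitary.2
  have key : A - c • 1 = U * (diagonal (fun i => hA.eigenvalues i - c)) * star U := by
    conv_lhs => rw [hA.spectral_theorem]; simp only [Unitary.conjStarAlgAut_apply, Unitary.coe_star]
    have h1 : (c • (1 : Matrix (Fin n) (Fin n) ℝ)) = U * (c • 1) * star U := by
      rw [Matrix.mul_smul, Matrix.mul_one, Matrix.smul_mul, hUU]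
    rw [h1, ← Matrix.sub_mul, ← Matrix.mul_sub]
    congr 2
    rw [← Matrix.diagonal_one, ← Matrix.diagonal_smul, Matrix.diagonal_sub]
    funext i
    simp [RCLike.ofReal, Function.comp]
  rw [key, Matrix.star_eq_conjTranspose]
  refine Matrix.PosSemidef.mul_mul_conjTranspose_same ?_ U
  refine Matrix.posSemidef_diagonal_iff.mpr fun i => ?_
  have : c ≤ hA.eigenvalues i := ciInf_le (Finite.bddBelow_range _) i
  linarith

lemma inf_eigenvalues_pos {n : ℕ} [Nonempty (Fin n)] {A : Matrix (Fin n) (Fin n) ℝ}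
    (hA : A.PosDef) : 0 < ⨅ i, hA.isHermitian.eigenvalues i := by
  obtain ⟨i0, hi0⟩ := Finite.exists_min hA.isHermitian.eigenvalues
  have h1 : hA.isHermitian.eigenvalues i0 ≤ ⨅ i, hA.isHermitian.eigenvalues i :=
    le_ciInf hi0
  exact lt_of_lt_of_le (hA.eigenvalues_pos i0) h1

end TraceDPAux

open TraceDPAux

/-- In the LQR setting with `Q = S + KᵀRK`, `P = ∑ γⁱ(Mⁱ)ᵀQMⁱ` and `D` positive
definite: `Tr(DP) ≥ σ_min(D) σ_min(S) / (1 − γ ρ(M)²)`. -/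
theorem trace_DP_lower_bound {n d : ℕ} (hn : 0 < n) (γ : ℝ)
    (hγ0 : 0 < γ) (hγ1 : γ < 1)
    (M S D : Matrix (Fin n) (Fin n) ℝ) (R : Matrix (Fin d) (Fin d) ℝ)
    (K : Matrix (Fin d) (Fin n) ℝ)
    (hM : specRad (Real.sqrt γ • M) < 1)
    (hS : S.PosDef) (hR : R.PosDef) (hD : D.PosDef) :
    haveI : Nonempty (Fin n) := ⟨⟨0, hn⟩⟩
    letI Q : Matrix (Fin n) (Fin n) ℝ := S + Kᵀ * R * K
    letI P : Matrix (Fin n) (Fin n) ℝ := ∑' i : ℕ, γ ^ i • ((M ^ i)ᵀ * Q * M ^ i)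
    (⨅ i, hD.isHermitian.eigenvalues i) * (⨅ i, hS.isHermitian.eigenvalues i)
        / (1 - γ * (specRad M) ^ 2)
      ≤ (D * P).trace := by
  haveI : Nonempty (Fin n) := ⟨⟨0, hn⟩⟩
  set Q : Matrix (Fin n) (Fin n) ℝ := S + Kᵀ * R * K with hQdef
  set A : Matrix (Fin n) (Fin n) ℝ := Real.sqrt γ • M with hAdef
  set f : ℕ → Matrix (Fin n) (Fin n) ℝ := fun i => (A ^ i)ᵀ * Q * A ^ i with hfdef
  set σD := ⨅ i, hD.isHermitian.eigenvalues i with hσDdef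
  set σS := ⨅ i, hS.isHermitian.eigenvalues i with hσSdef
  have hσD : 0 < σD := TraceDPAux.inf_eigenvalues_pos hD
  have hσS : 0 < σS := TraceDPAux.inf_eigenvalues_pos hS
  have key : ∀ i : ℕ, γ ^ i • ((M ^ i)ᵀ * Q * M ^ i) = f i := by
    intro i
    have hc : Real.sqrt γ ^ i * Real.sqrt γ ^ i = γ ^ i := by
      rw [← mul_pow, Real.mul_self_sqrt hγ0.le]
    simp only [hfdef, hAdef, smul_pow, Matrix.transpose_smul, Matrix.smul_mul, Matrix.mul_smul,
      smul_smul, hc]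
  -- spectral radius facts
  have hρA : specRad A = Real.sqrt γ * specRad M :=
    TraceDPAux.specRad_smul hn M (Real.sqrt_nonneg γ)
  have hA1 : specRad A < 1 := hM
  have hρA0 : 0 ≤ specRad A := TraceDPAux.specRad_nonneg A
  have hsq : γ * specRad M ^ 2 = specRad A ^ 2 := by
    rw [hρA, mul_pow, Real.sq_sqrt hγ0.le]
  have hr2lt : specRad A ^ 2 < 1 := pow_lt_one₀ hρA0 hA1 two_ne_zero
  have hr20 : 0 ≤ specRad A ^ 2 := sq_nonneg _
  -- positive semidefiniteness facts
  have hKRK : (Kᵀ * R * K).PosSemidef := by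
    have := hR.posSemidef.conjTranspose_mul_mul_same K
    rwa [Matrix.conjTranspose_eq_transpose_of_trivial] at this
  have hQpsd : Q.PosSemidef := hS.posSemidef.add hKRK
  have hQc : (Q - σS • (1 : Matrix (Fin n) (Fin n) ℝ)).PosSemidef := by
    have heq : Q - σS • (1 : Matrix (Fin n) (Fin n) ℝ)
        = (S - σS • (1 : Matrix (Fin n) (Fin n) ℝ)) + Kᵀ * R * K := by
      rw [hQdef]; abel
    rw [heq]
    exact (TraceDPAux.sub_inf_smul_psd hS.isHermitian).add hKRK
  have hfpsd : ∀ i : ℕ, (f i).PosSemidef := by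
    intro i
    have := hQpsd.conjTranspose_mul_mul_same (A ^ i)
    rwa [Matrix.conjTranspose_eq_transpose_of_trivial] at this
  -- termwise bounds
  have step1 : ∀ i : ℕ, σD * (f i).trace ≤ (D * f i).trace := by
    intro i
    have h := TraceDPAux.trace_mul_nonneg_of_psd
      (TraceDPAux.sub_inf_smul_psd hD.isHermitian) (hfpsd i)
    rw [Matrix.sub_mul, Matrix.smul_mul, Matrix.one_mul, Matrix.trace_sub, Matrix.trace_smul,
      smul_eq_mul] at h
    linarith
  have step2 : ∀ i : ℕ, σS * ((A ^ i)ᵀ * A ^ i).trace ≤ (f i).trace := by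
    intro i
    have hpsd := hQc.conjTranspose_mul_mul_same (A ^ i)
    rw [Matrix.conjTranspose_eq_transpose_of_trivial] at hpsd
    have h := TraceDPAux.trace_nonneg_of_psd hpsd
    rw [Matrix.mul_sub, Matrix.sub_mul, Matrix.mul_smul, Matrix.mul_one, Matrix.smul_mul,
      Matrix.trace_sub, Matrix.trace_smul, smul_eq_mul] at h
    linarith
  have step3 : ∀ i : ℕ, (specRad A ^ 2) ^ i ≤ ((A ^ i)ᵀ * A ^ i).trace := by
    intro i
    have := TraceDPAux.specRad_pow_sq_le hn A i
    rwa [← pow_right_comm] at this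
  have term : ∀ i : ℕ, σD * σS * (specRad A ^ 2) ^ i ≤ (D * f i).trace := by
    intro i
    have h3 : σS * (specRad A ^ 2) ^ i ≤ σS * ((A ^ i)ᵀ * A ^ i).trace :=
      mul_le_mul_of_nonneg_left (step3 i) hσS.le
    have h2 : σS * (specRad A ^ 2) ^ i ≤ (f i).trace := h3.trans (step2 i)
    have h1 : σD * (σS * (specRad A ^ 2) ^ i) ≤ σD * (f i).trace :=
      mul_le_mul_of_nonneg_left h2 hσD.le
    calc σD * σS * (specRad A ^ 2) ^ i = σD * (σS * (specRad A ^ 2) ^ i) := by ring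
      _ ≤ σD * (f i).trace := h1
      _ ≤ (D * f i).trace := step1 i
  -- summability and summation
  have hsum : Summable f := TraceDPAux.summable_conj_pow hn A Q hM
  have hφc : Continuous fun X : Matrix (Fin n) (Fin n) ℝ => (D * X).trace :=
    Continuous.matrix_trace (continuous_const.matrix_mul continuous_id)
  have hts : HasSum (fun i => (D * f i).trace) ((D * ∑' i, f i).trace) :=
    hsum.hasSum.map ((Matrix.traceAddMonoidHom (Fin n) ℝ).comp (AddMonoidHom.mulLeft D)) hφc
  have hgeo : HasSum (fun i : ℕ => σD * σS * (specRad A ^ 2) ^ i)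
      (σD * σS * (1 - specRad A ^ 2)⁻¹) :=
    (hasSum_geometric_of_lt_one hr20 hr2lt).mul_left _
  have final := hasSum_le term hgeo hts
  rw [show (∑' i : ℕ, γ ^ i • ((M ^ i)ᵀ * Q * M ^ i)) = ∑' i, f i from tsum_congr key]
  rw [div_eq_mul_inv, hsq]
  exact final
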